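/- Let C be a nonempty closed convex compact subset of R^d, f : R^d -> R convex and differentiable, and x* = argmin over C of f. Suppose points x_{t+1/2} in C, weights a_t = t^2, b_t = t^p (p >= 2), averages xbar_{t+1/2} defined by the b_t-weighted averaging, satisfy the regret bound sum_{t=1}^T a_t <grad f(xbar_{t+1/2}), x_{t+1/2} - x*> <= C_0 + C_1 * T^{3/2} + C_2 * T^{5/2} for all T, with constants C_0, C_1, C_2 >= 0. Then f(xbar_{T+1/2}) - f(x*) <= (p+1) * (C_0 / T^3 + C_1 / T^{3/2} + C_2 / sqrt(T)). -/

import Mathlib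

open Finset RealInnerProductSpace

lemma grad_convex_ineq {F : Type*} [NormedAddCommGroup F] [InnerProductSpace ℝ F]
    [CompleteSpace F]
    {f : F → ℝ} (hconv : ConvexOn ℝ Set.univ f) {a : F} (hd : DifferentiableAt ℝ f a) (b : F) :
    ⟪gradient f a, b - a⟫ ≤ f b - f a := by
  have hg := hd.hasGradientAt
  rw [hasGradientAt_iff_hasFDerivAt] at hg
  set g : ℝ → ℝ := fun t => f (t • (b - a) + a) with hgdef
  have hline : HasDerivAt (fun t : ℝ => t • (b - a) + a) (b - a) 0 := by
    simpa using ((hasDerivAt_id (0 : ℝ)).smul_const (b - a)).add_const a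
  have hcomp : HasDerivAt g (⟪gradient f a, b - a⟫) 0 := by
    have h0 : ((0 : ℝ) • (b - a) + a) = a := by simp
    have hg' : HasFDerivAt f ((InnerProductSpace.toDual ℝ F) (gradient f a))
        ((0 : ℝ) • (b - a) + a) := by rw [h0]; exact hg
    have := hg'.comp_hasDerivAt 0 hline
    simpa [Function.comp_def, hgdef] using this
  have hgconv : ConvexOn ℝ Set.univ g := by
    have := hconv.comp_affineMap (AffineMap.lineMap a b : ℝ →ᵃ[ℝ] F)
    simpa [Function.comp_def, AffineMap.lineMap_apply, vsub_eq_sub, vadd_eq_add, hgdef] using this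
  have hs := hgconv.le_slope_of_hasDerivAt (Set.mem_univ (0 : ℝ)) (Set.mem_univ (1 : ℝ))
    one_pos hcomp
  have : slope g 0 1 = f b - f a := by
    simp [slope_def_field, hgdef]
  linarith [hs, this.le, this.ge]

lemma sum_rpow_lb (p : ℝ) (hp : 0 ≤ p) (T : ℕ) :
    (T : ℝ) ^ (p + 1) / (p + 1) ≤ ∑ s ∈ Icc 1 T, (s : ℝ) ^ p := by
  have hmono : MonotoneOn (fun x : ℝ => x ^ p) (Set.Icc 0 (0 + (T : ℕ))) := by
    intro u hu v hv huv
    exact Real.rpow_le_rpow (by simpa using hu.1) huv hp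
  have hint := hmono.integral_le_sum
  have hI : (∫ x in (0 : ℝ)..(0 + (T : ℕ)), x ^ p) = (T : ℝ) ^ (p + 1) / (p + 1) := by
    rw [integral_rpow (Or.inl (by linarith))]
    rw [Real.zero_rpow (by linarith)]
    simp
  rw [hI] at hint
  refine hint.trans_eq ?_
  rw [show Icc 1 T = Ico 1 (T + 1) by rfl, Finset.sum_Ico_eq_sum_range]
  simp only [Nat.add_sub_cancel]
  apply Finset.sum_congr rfl
  intro i _
  norm_num [add_comm]

theorem stmt19 (d : ℕ) (K : Set (EuclideanSpace ℝ (Fin d)))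
    (hKconv : Convex ℝ K) (hKcl : IsClosed K) (hKcpt : IsCompact K) (hKne : K.Nonempty)
    (f : EuclideanSpace ℝ (Fin d) → ℝ)
    (hconv : ConvexOn ℝ Set.univ f) (hdiff : Differentiable ℝ f)
    (xstar : EuclideanSpace ℝ (Fin d)) (hxstar : xstar ∈ K)
    (hmin : ∀ y ∈ K, f xstar ≤ f y)
    (p : ℝ) (hp : 2 ≤ p)
    (x : ℕ → EuclideanSpace ℝ (Fin d)) (hx : ∀ t, x t ∈ K)
    (B : ℕ → ℝ) (hB : ∀ t, B t = ∑ s ∈ Icc 1 t, (s : ℝ) ^ p)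
    (xbar : ℕ → EuclideanSpace ℝ (Fin d))
    (hxbar : ∀ t, xbar t = (B t)⁻¹ • ∑ s ∈ Icc 1 t, (s : ℝ) ^ p • x s)
    (C0 C1 C2 : ℝ) (hC0 : 0 ≤ C0) (hC1 : 0 ≤ C1) (hC2 : 0 ≤ C2)
    (hreg : ∀ T : ℕ, 1 ≤ T →
      ∑ t ∈ Icc 1 T, (t : ℝ) ^ 2 * ⟪gradient f (xbar t), x t - xstar⟫ ≤
        C0 + C1 * (T : ℝ) ^ ((3 : ℝ) / 2) + C2 * (T : ℝ) ^ ((5 : ℝ) / 2))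
    (T : ℕ) (hT : 1 ≤ T) :
    f (xbar T) - f xstar ≤
      (p + 1) * (C0 / (T : ℝ) ^ 3 + C1 / (T : ℝ) ^ ((3 : ℝ) / 2) + C2 / Real.sqrt T) := by
  -- basic facts about B
  have hBpos : ∀ t : ℕ, 1 ≤ t → 0 < B t := by
    intro t ht
    rw [hB]
    apply Finset.sum_pos
    · intro s hs
      have : 0 < (s : ℝ) := by
        have := (Finset.mem_Icc.1 hs).1; positivity
      exact Real.rpow_pos_of_pos this p
    · exact ⟨1, Finset.mem_Icc.2 ⟨le_refl 1, ht⟩⟩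
  have hBnn : ∀ t : ℕ, 0 ≤ B t := by
    intro t
    rcases Nat.eq_zero_or_pos t with h | h
    · rw [h, hB]; simp
    · exact (hBpos t h).le
  have hBsucc : ∀ t : ℕ, B (t + 1) = B t + ((t + 1 : ℕ) : ℝ) ^ p := by
    intro t
    rw [hB, hB, Finset.sum_Icc_succ_top (by omega)]
  -- B t • xbar t = weighted sum
  have hsum : ∀ t : ℕ, B t • xbar t = ∑ s ∈ Icc 1 t, (s : ℝ) ^ p • x s := by
    intro t
    rcases Nat.eq_zero_or_pos t with h | h
    · subst h
      have hB0 : B 0 = 0 := by rw [hB]; simp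
      rw [hB0, zero_smul]
      simp
    · rw [hxbar, smul_inv_smul₀ (hBpos t h).ne']
  -- averages lie in K
  have hmem : ∀ t : ℕ, 1 ≤ t → xbar t ∈ K := by
    intro t ht
    rw [hxbar, Finset.smul_sum]
    have : ∀ s ∈ Icc 1 t, (B t)⁻¹ • ((s : ℝ) ^ p • x s) = ((B t)⁻¹ * (s : ℝ) ^ p) • x s := by
      intro s _; rw [smul_smul]
    rw [Finset.sum_congr rfl this]
    apply hKconv.sum_mem
    · intro s hs
      have h1 : (0:ℝ) < (s:ℝ) := by have := (Finset.mem_Icc.1 hs).1; positivity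
      exact mul_nonneg (inv_nonneg.2 (hBnn t)) (Real.rpow_nonneg h1.le p)
    · rw [← Finset.mul_sum, ← hB, inv_mul_cancel₀ (hBpos t ht).ne']
    · intro s _; exact hx s
  have hdel : ∀ t : ℕ, 1 ≤ t → 0 ≤ f (xbar t) - f xstar := by
    intro t ht
    have := hmin _ (hmem t ht)
    linarith
  -- one-step recursion
  have hrec : ∀ t : ℕ, B (t + 1) * (f (xbar (t + 1)) - f xstar) ≤
      B t * (f (xbar t) - f xstar) +
        ((t + 1 : ℕ) : ℝ) ^ p * ⟪gradient f (xbar (t + 1)), x (t + 1) - xstar⟫ := by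
    intro t
    set g := gradient f (xbar (t + 1)) with hgd
    have hb : ((t + 1 : ℕ) : ℝ) ^ p = B (t + 1) - B t := by rw [hBsucc]; ring
    have hbpos : (0:ℝ) < ((t + 1 : ℕ) : ℝ) ^ p := by
      apply Real.rpow_pos_of_pos; positivity
    have hvec : ((t + 1 : ℕ) : ℝ) ^ p • x (t + 1) = B (t + 1) • xbar (t + 1) - B t • xbar t := by
      rw [hsum, hsum, Finset.sum_Icc_succ_top (by omega)]
      abel
    have h2 : ((t + 1 : ℕ) : ℝ) ^ p • (x (t + 1) - xstar) =
        B (t + 1) • (xbar (t + 1) - xstar) - B t • (xbar t - xstar) := by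
      rw [smul_sub, hvec, hb, smul_sub, smul_sub, sub_smul]
      abel
    have key : ((t + 1 : ℕ) : ℝ) ^ p * ⟪g, x (t + 1) - xstar⟫ =
        B (t + 1) * ⟪g, xbar (t + 1) - xstar⟫ - B t * ⟪g, xbar t - xstar⟫ := by
      rw [← real_inner_smul_right, h2, inner_sub_right, real_inner_smul_right,
        real_inner_smul_right]
    have h3 : f (xbar (t + 1)) - f xstar ≤ ⟪g, xbar (t + 1) - xstar⟫ := by
      have h := grad_convex_ineq hconv (hdiff (xbar (t + 1))) xstar
      have h4 : ⟪g, xstar - xbar (t + 1)⟫ = -⟪g, xbar (t + 1) - xstar⟫ := by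
        rw [← inner_neg_right]; congr 1; abel
      rw [hgd]
      rw [h4] at h
      linarith
    have h5 : ⟪g, xbar t - xbar (t + 1)⟫ ≤ f (xbar t) - f (xbar (t + 1)) :=
      grad_convex_ineq hconv (hdiff (xbar (t + 1))) (xbar t)
    have h6 : ⟪g, xbar t - xstar⟫ = ⟪g, xbar t - xbar (t + 1)⟫ + ⟪g, xbar (t + 1) - xstar⟫ := by
      rw [← inner_add_right]; congr 1; abel
    rw [key, h6]
    have hBt := hBnn t
    nlinarith [mul_le_mul_of_nonneg_left h5 hBt, mul_le_mul_of_nonneg_left h3 hbpos.le]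
  -- telescoping
  have htel : ∀ S : ℕ, 1 ≤ S →
      (S : ℝ) ^ (2 - p) * B S * (f (xbar S) - f xstar) ≤
        ∑ t ∈ Icc 1 S, (t : ℝ) ^ 2 * ⟪gradient f (xbar t), x t - xstar⟫ := by
    intro S hS
    induction S, hS using Nat.le_induction with
    | base =>
      have h0 : B 0 = 0 := by rw [hB]; simp
      have h1 : B 1 = 1 := by rw [hB]; norm_num
      have hrec0 := hrec 0
      simp only [zero_add] at hrec0
      have h2 : ((1 : ℕ) : ℝ) ^ p = 1 := by norm_num
      rw [h0, h1, h2, zero_mul, zero_add, one_mul] at hrec0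
      rw [Icc_self, Finset.sum_singleton, h1, mul_one]
      have hc1 : ((1 : ℕ) : ℝ) ^ (2 - p) = 1 := by norm_num
      have hc2 : ((1 : ℕ) : ℝ) ^ 2 = 1 := by norm_num
      rw [hc1, one_mul, hc2, one_mul]
      linarith [hrec0]
    | succ n hn ih =>
      have hc : (0:ℝ) < ((n + 1 : ℕ) : ℝ) ^ (2 - p) := by
        apply Real.rpow_pos_of_pos; positivity
      have hrw : ((n + 1 : ℕ) : ℝ) ^ (2 - p) * ((n + 1 : ℕ) : ℝ) ^ p = ((n + 1 : ℕ) : ℝ) ^ 2 := by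
        rw [← Real.rpow_add (by positivity), ← Real.rpow_natCast (((n + 1 : ℕ) : ℝ)) 2]
        congr 1
        push_cast; ring
      have hcdec : ((n + 1 : ℕ) : ℝ) ^ (2 - p) ≤ ((n : ℕ) : ℝ) ^ (2 - p) := by
        apply Real.rpow_le_rpow_of_nonpos (by exact_mod_cast hn) (by exact_mod_cast Nat.le_succ n)
        linarith
      have hBd : 0 ≤ B n * (f (xbar n) - f xstar) :=
        mul_nonneg (hBnn n) (hdel n hn)
      rw [Finset.sum_Icc_succ_top (by omega)]
      have step := mul_le_mul_of_nonneg_left (hrec n) hc.le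
      calc ((n + 1 : ℕ) : ℝ) ^ (2 - p) * B (n + 1) * (f (xbar (n + 1)) - f xstar)
          ≤ ((n + 1 : ℕ) : ℝ) ^ (2 - p) * (B n * (f (xbar n) - f xstar)) +
            ((n + 1 : ℕ) : ℝ) ^ 2 * ⟪gradient f (xbar (n + 1)), x (n + 1) - xstar⟫ := by
            rw [← hrw]
            nlinarith [step]
        _ ≤ (n : ℝ) ^ (2 - p) * B n * (f (xbar n) - f xstar) +
            ((n + 1 : ℕ) : ℝ) ^ 2 * ⟪gradient f (xbar (n + 1)), x (n + 1) - xstar⟫ := by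
            have := mul_le_mul_of_nonneg_right hcdec hBd
            nlinarith [this]
        _ ≤ _ := by
            push_cast
            nlinarith [ih]
  -- put it together
  have hTpos : (0:ℝ) < (T:ℝ) := by exact_mod_cast hT
  have hp1 : (0:ℝ) < p + 1 := by linarith
  have hBlb := sum_rpow_lb p (by linarith) T
  rw [← hB] at hBlb
  have hmain := (htel T hT).trans (hreg T hT)
  -- (T)^(2-p) * B T ≥ T^3/(p+1)
  have hcb : (T : ℝ) ^ 3 / (p + 1) ≤ (T : ℝ) ^ (2 - p) * B T := by
    have h1 : (0:ℝ) < (T : ℝ) ^ (2 - p) := Real.rpow_pos_of_pos hTpos _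
    have h2 := mul_le_mul_of_nonneg_left hBlb h1.le
    have h3 : (T : ℝ) ^ (2 - p) * ((T : ℝ) ^ (p + 1) / (p + 1)) = (T : ℝ) ^ 3 / (p + 1) := by
      rw [mul_div_assoc', ← Real.rpow_add hTpos]
      congr 1
      rw [← Real.rpow_natCast ((T : ℝ)) 3]
      congr 1
      push_cast; ring
    rw [h3] at h2
    exact h2
  set δ := f (xbar T) - f xstar with hδ
  have hδnn := hdel T hT
  have hfinal : ((T : ℝ) ^ 3 / (p + 1)) * δ ≤
      C0 + C1 * (T : ℝ) ^ ((3 : ℝ) / 2) + C2 * (T : ℝ) ^ ((5 : ℝ) / 2) := by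
    refine le_trans ?_ hmain
    exact mul_le_mul_of_nonneg_right hcb hδnn
  -- divide
  have hT3 : (0:ℝ) < (T : ℝ) ^ 3 := by positivity
  have hdiv : δ ≤ (p + 1) * (C0 + C1 * (T : ℝ) ^ ((3 : ℝ) / 2) + C2 * (T : ℝ) ^ ((5 : ℝ) / 2)) /
      (T : ℝ) ^ 3 := by
    rw [le_div_iff₀ hT3]
    calc δ * (T : ℝ) ^ 3 = (p + 1) * (((T : ℝ) ^ 3 / (p + 1)) * δ) := by
          field_simp
      _ ≤ _ := by
          have := mul_le_mul_of_nonneg_left hfinal hp1.le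
          linarith
  refine hdiv.trans_eq ?_
  have e1 : (T : ℝ) ^ ((3 : ℝ) / 2) * (T : ℝ) ^ ((3 : ℝ) / 2) = (T : ℝ) ^ 3 := by
    rw [← Real.rpow_add hTpos, ← Real.rpow_natCast ((T : ℝ)) 3]
    congr 1
    norm_num
  have e2 : (T : ℝ) ^ ((5 : ℝ) / 2) * Real.sqrt T = (T : ℝ) ^ 3 := by
    rw [Real.sqrt_eq_rpow, ← Real.rpow_add hTpos, ← Real.rpow_natCast ((T : ℝ)) 3]
    congr 1
    norm_num
  have h32 : (0:ℝ) < (T : ℝ) ^ ((3 : ℝ) / 2) := Real.rpow_pos_of_pos hTpos _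
  have hsq : (0:ℝ) < Real.sqrt T := Real.sqrt_pos.2 hTpos
  have d1 : C1 * (T : ℝ) ^ ((3 : ℝ) / 2) / (T : ℝ) ^ 3 = C1 / (T : ℝ) ^ ((3 : ℝ) / 2) := by
    rw [← e1]
    field_simp
  have d2 : C2 * (T : ℝ) ^ ((5 : ℝ) / 2) / (T : ℝ) ^ 3 = C2 / Real.sqrt T := by
    rw [← e2]
    field_simp
  rw [mul_div_assoc, add_div, add_div, d1, d2]
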